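/- (Uniqueness of the equilibrium.) Suppose (A1), (A2) and (A3) hold. Then θ*_c is the unique equilibrium of the vector field F: F(θ*_c) = 0, and every θ ∈ ℝⁿ with F(θ) = 0 satisfies θ = θ*_c. -/

import Mathlib

open scoped RealInnerProductSpace
open Set Filter Topology

section aux

variable {n : ℕ}

/-- Derivative of a function along a line, expressed via the gradient. -/
lemma hasDerivAt_line (f : EuclideanSpace ℝ (Fin n) → ℝ) (x d : EuclideanSpace ℝ (Fin n))
    (hf : DifferentiableAt ℝ f x) :
    HasDerivAt (fun t : ℝ => f (x + t • d)) ⟪gradient f x, d⟫ 0 := by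
  have hL : HasDerivAt (fun t : ℝ => x + t • d) d 0 := by
    simpa using ((hasDerivAt_id (0 : ℝ)).smul_const d).const_add x
  have hgrad := hf.hasGradientAt.hasFDerivAt
  have hgrad' : HasFDerivAt f
      ((InnerProductSpace.toDual ℝ (EuclideanSpace ℝ (Fin n))) (gradient f x))
      ((fun t : ℝ => x + t • d) 0) := by simpa using hgrad
  have := hgrad'.comp_hasDerivAt (0 : ℝ) hL
  simpa [InnerProductSpace.toDual_apply_apply, Function.comp_def] using this

/-- If a real function has positive derivative at 0, it is eventually larger than `f 0`
on the right. -/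
lemma eventually_gt_of_hasDerivAt_pos {f : ℝ → ℝ} {f' : ℝ}
    (hf : HasDerivAt f f' 0) (hf' : 0 < f') : ∀ᶠ t in 𝓝[>] (0 : ℝ), f 0 < f t := by
  have hslope : Tendsto (slope f 0) (𝓝[≠] (0 : ℝ)) (𝓝 f') :=
    hasDerivAt_iff_tendsto_slope.mp hf
  have h1 : ∀ᶠ t in 𝓝[≠] (0 : ℝ), 0 < slope f 0 t :=
    hslope.eventually (eventually_gt_nhds hf')
  have hle : 𝓝[>] (0 : ℝ) ≤ 𝓝[≠] (0 : ℝ) :=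
    nhdsWithin_mono _ (fun t ht => ne_of_gt ht)
  filter_upwards [hle h1, self_mem_nhdsWithin] with t ht ht'
  have ht' : (0 : ℝ) < t := ht'
  have hpos : 0 < (f t - f 0) / t := by simpa [slope_def_field, div_eq_inv_mul] using ht
  have h2 := mul_pos hpos ht'
  rw [div_mul_cancel₀ _ (ne_of_gt ht')] at h2
  linarith

lemma eventually_lt_of_hasDerivAt_neg {f : ℝ → ℝ} {f' : ℝ}
    (hf : HasDerivAt f f' 0) (hf' : f' < 0) : ∀ᶠ t in 𝓝[>] (0 : ℝ), f t < f 0 := by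
  have := eventually_gt_of_hasDerivAt_pos (f := fun t => -f t) (f' := -f') hf.neg
    (by linarith)
  filter_upwards [this] with t ht
  linarith

end aux

open Classical in
/-- The safe-gradient-flow vector field `F`. -/
noncomputable def Fvec {n : ℕ} (J h : EuclideanSpace ℝ (Fin n) → ℝ) (c : ℝ)
    (θ : EuclideanSpace ℝ (Fin n)) : EuclideanSpace ℝ (Fin n) :=
  if gradient h θ = 0 then -gradient J θ
  else -gradient J θ +
    (max (⟪gradient J θ, gradient h θ⟫ - c * h θ) 0 / ‖gradient h θ‖ ^ 2) • gradient h θ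
set_option maxHeartbeats 2000000 in
/-- uniqueness of the equilibrium: under (A1)–(A3), θ*_c is the unique
equilibrium of the vector field F. -/
theorem stmt5 {n : ℕ} (hn : 1 ≤ n) (J h : EuclideanSpace ℝ (Fin n) → ℝ) (c : ℝ) (hc : 0 < c)
    (θc : EuclideanSpace ℝ (Fin n))
    (hJ : ContDiff ℝ 1 J) (hJ' : LocallyLipschitz (gradient J))
    (hh : ContDiff ℝ 1 h) (hh' : LocallyLipschitz (gradient h))
    (hA1 : 0 ≤ h θc ∧ (∀ θ, 0 ≤ h θ → θ ≠ θc → J θc < J θ) ∧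
      (∀ θ, 0 ≤ h θ → gradient J θ = 0 → θ = θc))
    (hA2 : (∃ θ, 0 ≤ h θ) ∧ ∀ ρ ∈ Set.range h, ρ ≤ 0 →
      ∃ L > 0, ∀ θ, h θ ≤ 0 → ρ ≤ h θ → L < ‖gradient h θ‖)
    (hA3 : ∀ θ, h θ = 0 →
      ⟪gradient h θ, gradient J θ⟫ = ‖gradient h θ‖ * ‖gradient J θ‖ → θ = θc) :
    Fvec J h c θc = 0 ∧ ∀ θ : EuclideanSpace ℝ (Fin n), Fvec J h c θ = 0 → θ = θc := by
  obtain ⟨hA1a, hA1b, hA1c⟩ := hA1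
  have hJd : ∀ x, DifferentiableAt ℝ J x := fun x => (hJ.differentiable one_ne_zero).differentiableAt
  have hhd : ∀ x, DifferentiableAt ℝ h x := fun x => (hh.differentiable one_ne_zero).differentiableAt
  -- key fact from (A2): no point with h θ ≤ 0 has vanishing ∇h
  have hgradh_ne : ∀ θ, h θ ≤ 0 → gradient h θ ≠ 0 := by
    intro θ hθ hg
    obtain ⟨L, hL, hLθ⟩ := hA2.2 (h θ) ⟨θ, rfl⟩ hθ
    have := hLθ θ hθ le_rfl
    rw [hg] at this
    simp at this
    linarith
  constructor
  · -- F(θc) = 0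
    rcases lt_or_eq_of_le hA1a with hpos | hzero
    · -- interior case: θc is a local minimum of J on all of ℝⁿ
      have hopen : IsOpen {x | 0 < h x} := isOpen_lt continuous_const hh.continuous
      have hmin : IsLocalMin J θc := by
        filter_upwards [hopen.mem_nhds hpos] with x hx
        by_cases hxc : x = θc
        · rw [hxc]
        · exact le_of_lt (hA1b x (le_of_lt hx) hxc)
      have hgJ : gradient J θc = 0 := by
        have := hmin.fderiv_eq_zero
        unfold gradient
        rw [this]
        simp
      unfold Fvec
      split
      · rw [hgJ]; simp
      · rw [hgJ]
        have : max (⟪(0 : EuclideanSpace ℝ (Fin n)), gradient h θc⟫ - c * h θc) 0 = 0 := by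
          rw [inner_zero_left]
          have : -(c * h θc) < 0 := by nlinarith
          rw [max_eq_right]; linarith
        rw [this]
        simp
    · -- boundary case: h θc = 0
      have hzero : h θc = 0 := hzero.symm
      have hG : gradient h θc ≠ 0 := hgradh_ne θc (le_of_eq hzero)
      set G := gradient h θc with hGdef
      set g := gradient J θc with hgdef
      -- first show the Cauchy-Schwarz equality case ⟪G, g⟫ = ‖G‖ * ‖g‖
      have heq : ⟪G, g⟫ = ‖G‖ * ‖g‖ := by
        by_contra hne
        -- construct a feasible descent direction d
        have hGn : (0 : ℝ) < ‖G‖ ^ 2 := pow_pos (norm_pos_iff.mpr hG) 2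
        set a : ℝ := ⟪g, G⟫ / ‖G‖ ^ 2 with ha
        set p : EuclideanSpace ℝ (Fin n) := g - a • G with hp
        have hGg : ⟪G, g⟫ = a * ‖G‖ ^ 2 := by
          rw [ha, real_inner_comm g G]; field_simp
        have hGp : ⟪G, p⟫ = 0 := by
          rw [hp, inner_sub_right, real_inner_smul_right, real_inner_self_eq_norm_sq, hGg]; ring
        have hgp : ⟪g, p⟫ = ‖p‖ ^ 2 := by
          have hgsum : g = a • G + p := by rw [hp]; abel
          calc ⟪g, p⟫ = ⟪a • G + p, p⟫ := by rw [← hgsum]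
            _ = a * ⟪G, p⟫ + ⟪p, p⟫ := by rw [inner_add_left, real_inner_smul_left]
            _ = ‖p‖ ^ 2 := by rw [hGp, real_inner_self_eq_norm_sq]; ring
        obtain ⟨ε, hε, hεd⟩ : ∃ ε : ℝ, 0 < ε ∧ ε * (a * ‖G‖ ^ 2) - ‖p‖ ^ 2 < 0 := by
          by_cases hp0 : p = 0
          · -- g = a • G with a < 0
            have hgaG : g = a • G := by
              have := hp0; rw [hp] at this; have := sub_eq_zero.mp this; exact this
            have haneg : a < 0 := by
              by_contra hha
              push_neg at hha
              apply hne
              rw [hgaG, real_inner_smul_right, real_inner_self_eq_norm_sq, norm_smul,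
                Real.norm_eq_abs, abs_of_nonneg hha]
              ring
            exact ⟨1, one_pos, by simp [hp0]; nlinarith⟩
          · have hpn : (0 : ℝ) < ‖p‖ ^ 2 := pow_pos (norm_pos_iff.mpr hp0) 2
            refine ⟨‖p‖ ^ 2 / (2 * (1 + |a| * ‖G‖ ^ 2)), div_pos hpn (by positivity), ?_⟩
            have h1 : (0 : ℝ) < 1 + |a| * ‖G‖ ^ 2 := by positivity
            have h2 : a * ‖G‖ ^ 2 ≤ |a| * ‖G‖ ^ 2 := by
              nlinarith [le_abs_self a]
            calc ‖p‖ ^ 2 / (2 * (1 + |a| * ‖G‖ ^ 2)) * (a * ‖G‖ ^ 2) - ‖p‖ ^ 2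
                ≤ ‖p‖ ^ 2 / (2 * (1 + |a| * ‖G‖ ^ 2)) * (1 + |a| * ‖G‖ ^ 2) - ‖p‖ ^ 2 := by
                  have hεpos : (0 : ℝ) < ‖p‖ ^ 2 / (2 * (1 + |a| * ‖G‖ ^ 2)) := by positivity
                  nlinarith
              _ = ‖p‖ ^ 2 / 2 - ‖p‖ ^ 2 := by field_simp
              _ < 0 := by linarith
        set d : EuclideanSpace ℝ (Fin n) := ε • G - p with hd
        have hGd : (0 : ℝ) < ⟪G, d⟫ := by
          rw [hd, inner_sub_right, real_inner_smul_right, hGp, real_inner_self_eq_norm_sq]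
          nlinarith
        have hgd : ⟪g, d⟫ < 0 := by
          rw [hd, inner_sub_right, real_inner_smul_right, hgp]
          have : ⟪g, G⟫ = a * ‖G‖ ^ 2 := by rw [ha]; field_simp
          rw [this]
          linarith
        -- h increases and J decreases along d
        have hhder := hasDerivAt_line h θc d (hhd θc)
        have hJder := hasDerivAt_line J θc d (hJd θc)
        have h1 : ∀ᶠ t in 𝓝[>] (0 : ℝ), h (θc + (0:ℝ) • d) < h (θc + t • d) :=
          eventually_gt_of_hasDerivAt_pos hhder hGd
        have h2 : ∀ᶠ t in 𝓝[>] (0 : ℝ), J (θc + t • d) < J (θc + (0:ℝ) • d) :=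
          eventually_lt_of_hasDerivAt_neg hJder hgd
        obtain ⟨t, ht1, ht2⟩ := ((h1.and h2).exists)
        simp only [zero_smul, add_zero] at ht1 ht2
        rw [hzero] at ht1
        have hne' : θc + t • d ≠ θc := by
          intro hcontra
          rw [hcontra] at ht2
          exact lt_irrefl _ ht2
        have := hA1b (θc + t • d) (le_of_lt ht1) hne'
        linarith
      -- from the equality case, g = λ • G with λ ≥ 0; compute F(θc) = 0
      have hpar : ‖g‖ • G = ‖G‖ • g := inner_eq_norm_mul_iff_real.mp heq
      unfold Fvec
      rw [if_neg hG]
      rw [← hgdef, ← hGdef, hzero]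
      have hinner : ⟪g, G⟫ = ‖G‖ * ‖g‖ := by rw [real_inner_comm]; exact heq
      rw [hinner]
      have hmax : max (‖G‖ * ‖g‖ - c * 0) 0 = ‖G‖ * ‖g‖ := by
        rw [mul_zero, sub_zero, max_eq_left]; positivity
      rw [hmax]
      have hGnorm : (0 : ℝ) < ‖G‖ := norm_pos_iff.mpr hG
      have : (‖G‖ * ‖g‖ / ‖G‖ ^ 2) • G = (‖g‖ / ‖G‖) • G := by
        congr 1
        field_simp
      rw [this]
      have : (‖g‖ / ‖G‖) • G = g := by
        have := hpar
        have h2 : (‖G‖⁻¹ * ‖g‖) • G = (‖G‖⁻¹ * ‖G‖) • g := by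
          rw [mul_smul, mul_smul, this]
        rw [inv_mul_cancel₀ (ne_of_gt hGnorm), one_smul] at h2
        rw [div_eq_inv_mul]
        exact h2
      rw [this]
      simp
  · -- uniqueness
    intro θ hF
    unfold Fvec at hF
    split at hF
    · -- ∇h θ = 0 : then h θ > 0 (by A2) and ∇J θ = 0
      rename_i hg0
      have hJ0 : gradient J θ = 0 := by
        have : gradient J θ = -(- gradient J θ) := by simp
        rw [this, hF]; simp
      have hpos : 0 ≤ h θ := by
        by_contra hneg
        push_neg at hneg
        exact hgradh_ne θ (le_of_lt hneg) hg0
      exact hA1c θ hpos hJ0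
    · rename_i hg0
      set G := gradient h θ with hGdef
      set g := gradient J θ with hgdef
      set m : ℝ := max (⟪g, G⟫ - c * h θ) 0 with hm
      have hmnn : 0 ≤ m := le_max_right _ _
      have hgeq : g = (m / ‖G‖ ^ 2) • G := by
        have : g = -(-g + (m / ‖G‖ ^ 2) • G) + (m / ‖G‖ ^ 2) • G := by abel
        rw [this, hF]; simp
      have hGn : (0 : ℝ) < ‖G‖ ^ 2 := by
        have : (0 : ℝ) < ‖G‖ := norm_pos_iff.mpr hg0
        positivity
      have hinner : ⟪g, G⟫ = m := by
        rw [hgeq, real_inner_smul_left, real_inner_self_eq_norm_sq]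
        field_simp
      rcases eq_or_lt_of_le hmnn with hm0 | hmpos
      · -- m = 0 : ∇J θ = 0 and h θ ≥ 0
        have hm0 : m = 0 := hm0.symm
        have hJ0 : g = 0 := by rw [hgeq, hm0]; simp
        have hle : ⟪g, G⟫ - c * h θ ≤ 0 := by
          by_contra hgt
          push_neg at hgt
          rw [hm, max_eq_left (le_of_lt hgt)] at hm0
          linarith
        rw [hJ0, inner_zero_left] at hle
        have hpos : 0 ≤ h θ := by nlinarith
        exact hA1c θ hpos hJ0
      · -- m > 0 : h θ = 0, and the CS equality holds; apply A3
        have hmeq : m = ⟪g, G⟫ - c * h θ := by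
          rcases max_cases (⟪g, G⟫ - c * h θ) 0 with ⟨he, _⟩ | ⟨he, _⟩
          · rw [hm, he]
          · rw [hm] at hmpos; rw [he] at hmpos; exact absurd hmpos (lt_irrefl 0)
        have hh0 : h θ = 0 := by
          rw [hinner] at hmeq
          have : c * h θ = 0 := by linarith
          rcases mul_eq_zero.mp this with hc0 | hh0
          · exact absurd hc0 (ne_of_gt hc)
          · exact hh0
        apply hA3 θ hh0
        rw [← hGdef, ← hgdef]
        have hlam : (0 : ℝ) < m / ‖G‖ ^ 2 := div_pos hmpos hGn
        rw [hgeq, real_inner_smul_right, real_inner_self_eq_norm_sq, norm_smul,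
          Real.norm_eq_abs, abs_of_pos hlam]
        ring
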